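/- Let R be a finite (not necessarily unital) ring with |Cent(R)| = 5, and let A, B, C, D be its four proper centralizers (the elements of Cent(R) other than R itself). Then |R| = |A| + |B| + |C| + |D| − 3|Z(R)|. -/
import Mathlib


/-- The centralizer of `r` in a (not necessarily unital) ring: `{s | r*s = s*r}`. -/
def rCentralizer {R : Type*} [NonUnitalRing R] (r : R) : Set R := {s | r * s = s * r}

/-- The set of all centralizers of elements of `R`. -/
def Cent (R : Type*) [NonUnitalRing R] : Set (Set R) :=
  Set.range (fun r : R => rCentralizer r)

/-- The center of a (not necessarily unital) ring, as a set. -/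
def rCenter (R : Type*) [NonUnitalRing R] : Set R := {s | ∀ r : R, r * s = s * r}

section Aux

variable {R : Type*} [NonUnitalRing R]

lemma mem_rC {r s : R} : s ∈ rCentralizer r ↔ r * s = s * r := Iff.rfl

lemma rC_symm {r s : R} (h : s ∈ rCentralizer r) : r ∈ rCentralizer s := h.symm

lemma self_mem_rC (r : R) : r ∈ rCentralizer r := rfl

lemma sub_mem_rC {r s t : R} (hs : s ∈ rCentralizer r) (ht : t ∈ rCentralizer r) :
    s - t ∈ rCentralizer r := by
  simp only [mem_rC, mul_sub, sub_mul] at *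
  rw [hs, ht]

lemma add_mem_rC {r s t : R} (hs : s ∈ rCentralizer r) (ht : t ∈ rCentralizer r) :
    s + t ∈ rCentralizer r := by
  simp only [mem_rC, mul_add, add_mul] at *
  rw [hs, ht]

lemma sub_mem_of_rC {X : Set R} {x0 : R} (hX : rCentralizer x0 = X) {u v : R}
    (hu : u ∈ X) (hv : v ∈ X) : u - v ∈ X := by
  subst hX; exact sub_mem_rC hu hv

lemma add_mem_of_rC {X : Set R} {x0 : R} (hX : rCentralizer x0 = X) {u v : R}
    (hu : u ∈ X) (hv : v ∈ X) : u + v ∈ X := by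
  subst hX; exact add_mem_rC hu hv

lemma neg_mem_of_rC {X : Set R} {x0 : R} (hX : rCentralizer x0 = X) {u : R}
    (hu : u ∈ X) : -u ∈ X := by
  subst hX
  have h0 : (0 : R) ∈ rCentralizer x0 := by simp [mem_rC]
  have := sub_mem_rC h0 hu
  simpa using this

/-- If `u + v ∈ X` and `u ∈ X` then `v ∈ X`, for a centralizer `X`. -/
lemma mem_of_add_left {X : Set R} {x0 : R} (hX : rCentralizer x0 = X) {u v : R}
    (huv : u + v ∈ X) (hu : u ∈ X) : v ∈ X := by
  have := sub_mem_of_rC hX huv hu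
  simpa using this

/-- If `u + v ∈ X` and `v ∈ X` then `u ∈ X`, for a centralizer `X`. -/
lemma mem_of_add_right {X : Set R} {x0 : R} (hX : rCentralizer x0 = X) {u v : R}
    (huv : u + v ∈ X) (hv : v ∈ X) : u ∈ X := by
  have := sub_mem_of_rC hX huv hv
  simpa using this

lemma center_mem_rC {z : R} (hz : z ∈ rCenter R) (r : R) : z ∈ rCentralizer r := hz r

lemma rC_univ_of_center {x : R} (hx : x ∈ rCenter R) : rCentralizer x = Set.univ := by
  ext s
  simp only [Set.mem_univ, iff_true, mem_rC]
  exact (hx s).symm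

lemma center_of_rC_univ {x : R} (hx : rCentralizer x = Set.univ) : x ∈ rCenter R := by
  intro r
  have : r ∈ rCentralizer x := by rw [hx]; trivial
  exact this.symm

lemma rC_add_central (x : R) {z : R} (hz : z ∈ rCenter R) :
    rCentralizer (x + z) = rCentralizer x := by
  ext t
  simp only [mem_rC, add_mul, mul_add]
  have hzt : z * t = t * z := (hz t).symm
  constructor
  · intro h; rw [hzt] at h; exact add_right_cancel h
  · intro h; rw [h, hzt]

/-- An element lying in all four proper centralizers is central. -/
lemma allfour_center {W1 W2 W3 W4 : Set R}
    (hperm : ∀ r : R, rCentralizer r = Set.univ ∨ rCentralizer r = W1 ∨ rCentralizer r = W2 ∨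
      rCentralizer r = W3 ∨ rCentralizer r = W4)
    {x : R} (h1 : x ∈ W1) (h2 : x ∈ W2) (h3 : x ∈ W3) (h4 : x ∈ W4) : x ∈ rCenter R := by
  intro r
  have hx : x ∈ rCentralizer r := by
    rcases hperm r with h | h | h | h | h <;> rw [h] <;> first | trivial | assumption
  exact hx

/-- A ring is not the union of two proper centralizers. -/
lemma no_two_cover {S T : Set R} {s0 t0 : R}
    (hS : rCentralizer s0 = S) (hT : rCentralizer t0 = T)
    (hSu : S ≠ Set.univ) (hTu : T ≠ Set.univ)
    (hcov : ∀ r : R, r ∈ S ∨ r ∈ T) : False := by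
  obtain ⟨p, hp⟩ := (Set.ne_univ_iff_exists_notMem T).1 hTu
  obtain ⟨q, hq⟩ := (Set.ne_univ_iff_exists_notMem S).1 hSu
  have hpS : p ∈ S := (hcov p).resolve_right hp
  have hqT : q ∈ T := (hcov q).resolve_left hq
  rcases hcov (p + q) with h | h
  · exact hq (mem_of_add_left hS h hpS)
  · exact hp (mem_of_add_right hT h hqT)

/-- The inclusion case: two distinct proper centralizers cannot be nested
(given that there are exactly four proper centralizers). -/
lemma incl_case {W1 W2 W3 W4 : Set R} {w1 w2 w3 w4 : R}
    (h1 : rCentralizer w1 = W1) (h2 : rCentralizer w2 = W2)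
    (h3 : rCentralizer w3 = W3) (h4 : rCentralizer w4 = W4)
    (hperm : ∀ r : R, rCentralizer r = Set.univ ∨ rCentralizer r = W1 ∨ rCentralizer r = W2 ∨
      rCentralizer r = W3 ∨ rCentralizer r = W4)
    (hu1 : W1 ≠ Set.univ) (hu2 : W2 ≠ Set.univ) (hu3 : W3 ≠ Set.univ) (hu4 : W4 ≠ Set.univ)
    (h12 : W1 ≠ W2) (hsub : W1 ⊆ W2) : False := by
  -- the ring is covered by W2 ∪ W3 ∪ W4
  have hcov : ∀ r : R, r ∈ W2 ∨ r ∈ W3 ∨ r ∈ W4 := by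
    intro r
    rcases hperm r with h | h | h | h | h
    · left
      have := center_of_rC_univ h
      rw [← h2]; exact center_mem_rC this w2
    · left; exact hsub (by rw [← h]; exact self_mem_rC r)
    · left; rw [← h]; exact self_mem_rC r
    · right; left; rw [← h]; exact self_mem_rC r
    · right; right; rw [← h]; exact self_mem_rC r
  -- an element of W3 only
  obtain ⟨w, hw3, hw2, hw4⟩ : ∃ w, w ∈ W3 ∧ w ∉ W2 ∧ w ∉ W4 := by
    by_contra h
    push_neg at h
    refine no_two_cover h2 h4 hu2 hu4 (fun r => ?_)
    rcases hcov r with h' | h' | h'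
    · exact Or.inl h'
    · by_cases hr2 : r ∈ W2
      · exact Or.inl hr2
      · exact Or.inr (h r h' hr2)
    · exact Or.inr h'
  -- an element of W4 only
  obtain ⟨q, hq4, hq2, hq3⟩ : ∃ q, q ∈ W4 ∧ q ∉ W2 ∧ q ∉ W3 := by
    by_contra h
    push_neg at h
    refine no_two_cover h2 h3 hu2 hu3 (fun r => ?_)
    rcases hcov r with h' | h' | h'
    · exact Or.inl h'
    · exact Or.inr h'
    · by_cases hr2 : r ∈ W2
      · exact Or.inl hr2
      · exact Or.inr (h r h' hr2)
  -- pairwise intersections land in the third subgroup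
  have p23 : ∀ t : R, t ∈ W2 → t ∈ W3 → t ∈ W4 := by
    intro t ht2 ht3
    rcases hcov (t + q) with h | h | h
    · exact absurd (mem_of_add_left h2 h ht2) hq2
    · exact absurd (mem_of_add_left h3 h ht3) hq3
    · exact mem_of_add_right h4 h hq4
  have p24 : ∀ t : R, t ∈ W2 → t ∈ W4 → t ∈ W3 := by
    intro t ht2 ht4
    rcases hcov (t + w) with h | h | h
    · exact absurd (mem_of_add_left h2 h ht2) hw2
    · exact mem_of_add_right h3 h hw3
    · exact absurd (mem_of_add_left h4 h ht4) hw4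
  -- helpers for the index-2 argument on W3
  have h2to4 : ∀ g : R, g ∉ W3 → g ∈ W2 → g + w ∈ W4 := by
    intro g hg3 hg2
    rcases hcov (g + w) with h | h | h
    · exact absurd (mem_of_add_left h2 h hg2) hw2
    · exact absurd (mem_of_add_right h3 h hw3) hg3
    · exact h
  have h4to2 : ∀ g : R, g ∉ W3 → g ∈ W4 → g + w ∈ W2 := by
    intro g hg3 hg4
    rcases hcov (g + w) with h | h | h
    · exact h
    · exact absurd (mem_of_add_right h3 h hw3) hg3
    · exact absurd (mem_of_add_left h4 h hg4) hw4
  -- index 2: differences of elements outside W3 lie in W3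
  have case22 : ∀ g g' : R, g ∉ W3 → g' ∉ W3 → g ∈ W2 → g' ∈ W2 → g - g' ∈ W3 := by
    intro g g' hg3 hg'3 hg2 hg'2
    have hgw := h2to4 g hg3 hg2
    have hg'w := h2to4 g' hg'3 hg'2
    have hd4 : g - g' ∈ W4 := by
      have : (g + w) - (g' + w) ∈ W4 := sub_mem_of_rC h4 hgw hg'w
      simpa using this
    exact p24 _ (sub_mem_of_rC h2 hg2 hg'2) hd4
  have case44 : ∀ g g' : R, g ∉ W3 → g' ∉ W3 → g ∈ W4 → g' ∈ W4 → g - g' ∈ W3 := by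
    intro g g' hg3 hg'3 hg4 hg'4
    have hgw := h4to2 g hg3 hg4
    have hg'w := h4to2 g' hg'3 hg'4
    have hd2 : g - g' ∈ W2 := by
      have : (g + w) - (g' + w) ∈ W2 := sub_mem_of_rC h2 hgw hg'w
      simpa using this
    exact p24 _ hd2 (sub_mem_of_rC h4 hg4 hg'4)
  have case24 : ∀ g g' : R, g ∉ W3 → g' ∉ W3 → g ∈ W2 → g' ∈ W4 → g - g' ∈ W3 := by
    intro g g' hg3 hg'3 hg2 hg'4
    by_contra hd3
    rcases hcov (g - g') with hd | hd | hd
    · have hg'2 : g' ∈ W2 := by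
        have : g - (g - g') ∈ W2 := sub_mem_of_rC h2 hg2 hd
        simpa using this
      exact hd3 (case22 g g' hg3 hg'3 hg2 hg'2)
    · exact hd3 hd
    · have hg4 : g ∈ W4 := by
        have : (g - g') + g' ∈ W4 := add_mem_of_rC h4 hd hg'4
        simpa using this
      exact hd3 (case44 g g' hg3 hg'3 hg4 hg'4)
  have idx2 : ∀ g g' : R, g ∉ W3 → g' ∉ W3 → g - g' ∈ W3 := by
    intro g g' hg3 hg'3
    have hg : g ∈ W2 ∨ g ∈ W4 := by
      rcases hcov g with h | h | h
      · exact Or.inl h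
      · exact absurd h hg3
      · exact Or.inr h
    have hg' : g' ∈ W2 ∨ g' ∈ W4 := by
      rcases hcov g' with h | h | h
      · exact Or.inl h
      · exact absurd h hg'3
      · exact Or.inr h
    rcases hg with hg2 | hg4 <;> rcases hg' with hg'2 | hg'4
    · exact case22 g g' hg3 hg'3 hg2 hg'2
    · exact case24 g g' hg3 hg'3 hg2 hg'4
    · have := case24 g' g hg'3 hg3 hg'2 hg4
      have h' := neg_mem_of_rC h3 this
      simpa [neg_sub] using h'
    · exact case44 g g' hg3 hg'3 hg4 hg'4
  -- W1 ∩ W3 is central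
  have h13Z : ∀ t : R, t ∈ W1 → t ∈ W3 → t ∈ rCenter R := by
    intro t ht1 ht3
    have ht2 : t ∈ W2 := hsub ht1
    have ht4 : t ∈ W4 := p23 t ht2 ht3
    exact allfour_center hperm ht1 ht2 ht3 ht4
  -- generators
  have hx1 : w1 ∈ W1 := by rw [← h1]; exact self_mem_rC w1
  have hx2 : w1 ∈ W2 := hsub hx1
  have hb1 : w2 ∈ W1 := by
    rw [← h1]
    exact rC_symm (by rw [h2]; exact hx2)
  have hw1nc : w1 ∉ rCenter R := fun hc => hu1 (by rw [← h1, rC_univ_of_center hc])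
  have hw2nc : w2 ∉ rCenter R := fun hc => hu2 (by rw [← h2, rC_univ_of_center hc])
  have hw1n3 : w1 ∉ W3 := fun h => hw1nc (h13Z w1 hx1 h)
  have hw2n3 : w2 ∉ W3 := fun h => hw2nc (h13Z w2 hb1 h)
  have hd : w1 - w2 ∈ W3 := idx2 w1 w2 hw1n3 hw2n3
  have hd1 : w1 - w2 ∈ W1 := sub_mem_of_rC h1 hx1 hb1
  have hdZ : w1 - w2 ∈ rCenter R := h13Z _ hd1 hd
  apply h12
  rw [← h1, ← h2]
  have he : w2 + (w1 - w2) = w1 := by abel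
  rw [← he, rC_add_central w2 hdZ]

/-- If a noncentral element lies in three distinct proper centralizers, contradiction. -/
lemma three_case {W1 W2 W3 W4 : Set R}
    (hperm : ∀ r : R, rCentralizer r = Set.univ ∨ rCentralizer r = W1 ∨ rCentralizer r = W2 ∨
      rCentralizer r = W3 ∨ rCentralizer r = W4)
    {x f : R} (hx1 : x ∈ W1) (hx2 : x ∈ W2) (hx3 : x ∈ W3)
    (hf : rCentralizer f = W4) (hfx : ¬ f * x = x * f) : False := by
  have key : ∀ Y : Set R, rCentralizer (f + x) = Y → x ∈ Y → False := by
    intro Y hY hxY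
    rw [← hY] at hxY
    have : (f + x) * x = x * (f + x) := hxY
    rw [add_mul, mul_add] at this
    exact hfx (add_right_cancel this)
  rcases hperm (f + x) with h | h | h | h | h
  · exact key _ h (by trivial)
  · exact key _ h hx1
  · exact key _ h hx2
  · exact key _ h hx3
  · -- rCentralizer (f + x) = W4 : but f ∈ W4
    have hfY : f ∈ rCentralizer (f + x) := by
      rw [h, ← hf]; exact self_mem_rC f
    have : (f + x) * f = f * (f + x) := hfY
    rw [add_mul, mul_add] at this
    exact hfx ((add_left_cancel this).symm)

/-- Core case: a noncentral element whose centralizer is `W1` cannot lie in `W2`. -/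
lemma core_case {W1 W2 W3 W4 : Set R} {w1 w2 w3 w4 : R}
    (h1 : rCentralizer w1 = W1) (h2 : rCentralizer w2 = W2)
    (h3 : rCentralizer w3 = W3) (h4 : rCentralizer w4 = W4)
    (hperm : ∀ r : R, rCentralizer r = Set.univ ∨ rCentralizer r = W1 ∨ rCentralizer r = W2 ∨
      rCentralizer r = W3 ∨ rCentralizer r = W4)
    (hu1 : W1 ≠ Set.univ) (hu2 : W2 ≠ Set.univ) (hu3 : W3 ≠ Set.univ) (hu4 : W4 ≠ Set.univ)
    (h12 : W1 ≠ W2)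
    {x : R} (hx : rCentralizer x = W1) (hxW2 : x ∈ W2) : False := by
  have hxW1 : x ∈ W1 := by rw [← hx]; exact self_mem_rC x
  have hbx : w2 * x = x * w2 := by rw [← h2] at hxW2; exact hxW2
  set e := x + w2 with he
  have hsum : ∀ t : R, t ∈ rCentralizer x → t ∈ rCentralizer e → t ∈ rCentralizer w2 := by
    intro t htx hte
    have h1' : x * t = t * x := htx
    have h2' : (x + w2) * t = t * (x + w2) := hte
    rw [add_mul, mul_add, h1'] at h2'
    exact add_left_cancel h2'
  have hsum' : ∀ t : R, t ∈ rCentralizer w2 → t ∈ rCentralizer e → t ∈ rCentralizer x := by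
    intro t htb hte
    have h1' : w2 * t = t * w2 := htb
    have h2' : (x + w2) * t = t * (x + w2) := hte
    rw [add_mul, mul_add, h1'] at h2'
    have := add_right_cancel h2'
    exact this
  have hxe : x ∈ rCentralizer e := by
    show e * x = x * e
    rw [he, add_mul, mul_add, hbx]
  rcases hperm e with h | h | h | h | h
  · -- e central: then W1 = W2
    apply h12
    have hec := center_of_rC_univ h
    rw [← hx, ← h2]
    ext t
    have hte : t ∈ rCentralizer e := by rw [rC_univ_of_center hec]; trivial
    exact ⟨fun ht => hsum t ht hte, fun ht => hsum' t ht hte⟩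
  · -- rCentralizer e = W1 : get W1 ⊆ W2
    have hsub : W1 ⊆ W2 := by
      intro t ht
      have htx : t ∈ rCentralizer x := by rwa [hx]
      have hte : t ∈ rCentralizer e := by rw [h]; exact ht
      rw [← h2]
      exact hsum t htx hte
    exact incl_case h1 h2 h3 h4 hperm hu1 hu2 hu3 hu4 h12 hsub
  · -- rCentralizer e = W2 : get W2 ⊆ W1
    have hsub : W2 ⊆ W1 := by
      intro t ht
      have htb : t ∈ rCentralizer w2 := by rwa [h2]
      have hte : t ∈ rCentralizer e := by rw [h]; exact ht
      rw [← hx]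
      exact hsum' t htb hte
    exact incl_case h2 h1 h3 h4 (fun r => by rcases hperm r with h' | h' | h' | h' | h' <;> tauto)
      hu2 hu1 hu3 hu4 (Ne.symm h12) hsub
  · -- rCentralizer e = W3 : x lies in W1 ∩ W2 ∩ W3
    have hxW3 : x ∈ W3 := by rw [← h]; exact hxe
    have hxW4 : x ∉ W4 := by
      intro hx4
      have := allfour_center hperm hxW1 hxW2 hxW3 hx4
      exact hu1 (by rw [← hx, rC_univ_of_center this])
    have hfx : ¬ w4 * x = x * w4 := by
      intro hc
      exact hxW4 (by rw [← h4]; exact hc)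
    exact three_case hperm hxW1 hxW2 hxW3 h4 hfx
  · -- rCentralizer e = W4 : symmetric
    have hxW4 : x ∈ W4 := by rw [← h]; exact hxe
    have hxW3 : x ∉ W3 := by
      intro hx3
      have := allfour_center hperm hxW1 hxW2 hx3 hxW4
      exact hu1 (by rw [← hx, rC_univ_of_center this])
    have hfx : ¬ w3 * x = x * w3 := by
      intro hc
      exact hxW3 (by rw [← h3]; exact hc)
    exact three_case (W3 := W4) (W4 := W3)
      (fun r => by rcases hperm r with h' | h' | h' | h' | h' <;> tauto)
      hxW1 hxW2 hxW4 h3 hfx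

/-- Pairwise intersections of distinct proper centralizers are central. -/
lemma pair_case {W1 W2 W3 W4 : Set R} {w1 w2 w3 w4 : R}
    (h1 : rCentralizer w1 = W1) (h2 : rCentralizer w2 = W2)
    (h3 : rCentralizer w3 = W3) (h4 : rCentralizer w4 = W4)
    (hperm : ∀ r : R, rCentralizer r = Set.univ ∨ rCentralizer r = W1 ∨ rCentralizer r = W2 ∨
      rCentralizer r = W3 ∨ rCentralizer r = W4)
    (hu1 : W1 ≠ Set.univ) (hu2 : W2 ≠ Set.univ) (hu3 : W3 ≠ Set.univ) (hu4 : W4 ≠ Set.univ)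
    (h12 : W1 ≠ W2) (h13 : W1 ≠ W3) (h14 : W1 ≠ W4) :
    ∀ s : R, s ∈ W1 → s ∈ W2 → s ∈ rCenter R := by
  intro s hs1 hs2
  rcases hperm s with h | h | h | h | h
  · exact center_of_rC_univ h
  · exact absurd (core_case h1 h2 h3 h4 hperm hu1 hu2 hu3 hu4 h12 h hs2) id
  · exact absurd (core_case h2 h1 h3 h4
      (fun r => by rcases hperm r with h' | h' | h' | h' | h' <;> tauto)
      hu2 hu1 hu3 hu4 (Ne.symm h12) h hs1) id
  · -- rCentralizer s = W3 : then w1 ∈ W3 and rCentralizer w1 = W1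
    have hw1s : w1 ∈ rCentralizer s := rC_symm (by rw [h1]; exact hs1)
    have hw1W3 : w1 ∈ W3 := by rwa [h] at hw1s
    exact absurd (core_case h1 h3 h2 h4
      (fun r => by rcases hperm r with h' | h' | h' | h' | h' <;> tauto)
      hu1 hu3 hu2 hu4 h13 h1 hw1W3) id
  · have hw1s : w1 ∈ rCentralizer s := rC_symm (by rw [h1]; exact hs1)
    have hw1W4 : w1 ∈ W4 := by rwa [h] at hw1s
    exact absurd (core_case h1 h4 h2 h3
      (fun r => by rcases hperm r with h' | h' | h' | h' | h' <;> tauto)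
      hu1 hu4 hu2 hu3 h14 h1 hw1W4) id

end Aux

/-- In a finite `5`-centralizer ring with proper centralizers `A, B, C, D`,
`|R| = |A| + |B| + |C| + |D| - 3|Z(R)|`. -/
theorem five_centralizer_card_eq (R : Type*) [NonUnitalRing R] [Finite R]
    (h5 : (Cent R).ncard = 5) (A B C D : Set R)
    (hA : A ∈ Cent R) (hB : B ∈ Cent R) (hC : C ∈ Cent R) (hD : D ∈ Cent R)
    (hAu : A ≠ Set.univ) (hBu : B ≠ Set.univ) (hCu : C ≠ Set.univ) (hDu : D ≠ Set.univ)
    (hAB : A ≠ B) (hAC : A ≠ C) (hAD : A ≠ D) (hBC : B ≠ C) (hBD : B ≠ D) (hCD : C ≠ D) :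
    (Nat.card R : ℤ) =
      A.ncard + B.ncard + C.ncard + D.ncard - 3 * (rCenter R).ncard := by
  classical
  -- Cent R is exactly {univ, A, B, C, D}
  have hunivC : Set.univ ∈ Cent R := ⟨0, by ext s; simp [rCentralizer]⟩
  have hSsub : ({Set.univ, A, B, C, D} : Set (Set R)) ⊆ Cent R := by
    intro X hX
    simp only [Set.mem_insert_iff, Set.mem_singleton_iff] at hX
    rcases hX with rfl | rfl | rfl | rfl | rfl <;> assumption
  have hS5 : ({Set.univ, A, B, C, D} : Set (Set R)).ncard = 5 := by
    rw [Set.ncard_insert_of_notMem (by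
          simp only [Set.mem_insert_iff, Set.mem_singleton_iff]
          push_neg
          exact ⟨Ne.symm hAu, Ne.symm hBu, Ne.symm hCu, Ne.symm hDu⟩) (Set.toFinite _),
        Set.ncard_insert_of_notMem (by
          simp only [Set.mem_insert_iff, Set.mem_singleton_iff]
          push_neg
          exact ⟨hAB, hAC, hAD⟩) (Set.toFinite _),
        Set.ncard_insert_of_notMem (by
          simp only [Set.mem_insert_iff, Set.mem_singleton_iff]
          push_neg
          exact ⟨hBC, hBD⟩) (Set.toFinite _),
        Set.ncard_insert_of_notMem (by simpa using hCD) (Set.toFinite _),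
        Set.ncard_singleton]
  have hCS : Cent R = {Set.univ, A, B, C, D} := by
    refine (Set.eq_of_subset_of_ncard_le hSsub ?_ (Set.toFinite _)).symm
    rw [h5, hS5]
  have hperm : ∀ r : R, rCentralizer r = Set.univ ∨ rCentralizer r = A ∨ rCentralizer r = B ∨
      rCentralizer r = C ∨ rCentralizer r = D := by
    intro r
    have hr : rCentralizer r ∈ Cent R := ⟨r, rfl⟩
    rw [hCS] at hr
    simpa using hr
  obtain ⟨a, ha⟩ := hA
  obtain ⟨b, hb⟩ := hB
  obtain ⟨c, hc⟩ := hC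
  obtain ⟨d, hd⟩ := hD
  have ha : rCentralizer a = A := ha
  have hb : rCentralizer b = B := hb
  have hc : rCentralizer c = C := hc
  have hd : rCentralizer d = D := hd
  -- pairwise intersections are central
  have hABZ : ∀ s : R, s ∈ A → s ∈ B → s ∈ rCenter R :=
    pair_case ha hb hc hd hperm hAu hBu hCu hDu hAB hAC hAD
  have hACZ : ∀ s : R, s ∈ A → s ∈ C → s ∈ rCenter R :=
    pair_case ha hc hb hd (fun r => by rcases hperm r with h | h | h | h | h <;> tauto)
      hAu hCu hBu hDu hAC hAB hAD
  have hADZ : ∀ s : R, s ∈ A → s ∈ D → s ∈ rCenter R :=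
    pair_case ha hd hb hc (fun r => by rcases hperm r with h | h | h | h | h <;> tauto)
      hAu hDu hBu hCu hAD hAB hAC
  have hBCZ : ∀ s : R, s ∈ B → s ∈ C → s ∈ rCenter R :=
    pair_case hb hc ha hd (fun r => by rcases hperm r with h | h | h | h | h <;> tauto)
      hBu hCu hAu hDu hBC (Ne.symm hAB) hBD
  have hBDZ : ∀ s : R, s ∈ B → s ∈ D → s ∈ rCenter R :=
    pair_case hb hd ha hc (fun r => by rcases hperm r with h | h | h | h | h <;> tauto)
      hBu hDu hAu hCu hBD (Ne.symm hAB) hBC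
  have hCDZ : ∀ s : R, s ∈ C → s ∈ D → s ∈ rCenter R :=
    pair_case hc hd ha hb (fun r => by rcases hperm r with h | h | h | h | h <;> tauto)
      hCu hDu hAu hBu hCD (Ne.symm hAC) (Ne.symm hBC)
  -- the center is contained in each proper centralizer
  have hZA : rCenter R ⊆ A := fun z hz => by rw [← ha]; exact center_mem_rC hz a
  have hZB : rCenter R ⊆ B := fun z hz => by rw [← hb]; exact center_mem_rC hz b
  have hZC : rCenter R ⊆ C := fun z hz => by rw [← hc]; exact center_mem_rC hz c
  have hZD : rCenter R ⊆ D := fun z hz => by rw [← hd]; exact center_mem_rC hz d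
  -- covering
  have hcovU : ∀ r : R, r ∈ A ∨ r ∈ B ∨ r ∈ C ∨ r ∈ D := by
    intro r
    rcases hperm r with h | h | h | h | h
    · exact Or.inl (hZA (center_of_rC_univ h))
    · exact Or.inl (by rw [← h]; exact self_mem_rC r)
    · exact Or.inr (Or.inl (by rw [← h]; exact self_mem_rC r))
    · exact Or.inr (Or.inr (Or.inl (by rw [← h]; exact self_mem_rC r)))
    · exact Or.inr (Or.inr (Or.inr (by rw [← h]; exact self_mem_rC r)))
  set Z := rCenter R with hZ
  have hU : (Set.univ : Set R) =
      (A \ Z) ∪ ((B \ Z) ∪ ((C \ Z) ∪ ((D \ Z) ∪ Z))) := by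
    ext r
    simp only [Set.mem_univ, true_iff, Set.mem_union, Set.mem_diff]
    by_cases hz : r ∈ Z
    · tauto
    · rcases hcovU r with h | h | h | h <;> tauto
  have hd1 : Disjoint (A \ Z) ((B \ Z) ∪ ((C \ Z) ∪ ((D \ Z) ∪ Z))) := by
    rw [Set.disjoint_left]
    rintro x ⟨hxA, hxZ⟩ hx
    simp only [Set.mem_union, Set.mem_diff] at hx
    rcases hx with ⟨hxB, _⟩ | ⟨hxC, _⟩ | ⟨hxD, _⟩ | hxZ'
    · exact hxZ (hABZ x hxA hxB)
    · exact hxZ (hACZ x hxA hxC)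
    · exact hxZ (hADZ x hxA hxD)
    · exact hxZ hxZ'
  have hd2 : Disjoint (B \ Z) ((C \ Z) ∪ ((D \ Z) ∪ Z)) := by
    rw [Set.disjoint_left]
    rintro x ⟨hxB, hxZ⟩ hx
    simp only [Set.mem_union, Set.mem_diff] at hx
    rcases hx with ⟨hxC, _⟩ | ⟨hxD, _⟩ | hxZ'
    · exact hxZ (hBCZ x hxB hxC)
    · exact hxZ (hBDZ x hxB hxD)
    · exact hxZ hxZ'
  have hd3 : Disjoint (C \ Z) ((D \ Z) ∪ Z) := by
    rw [Set.disjoint_left]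
    rintro x ⟨hxC, hxZ⟩ hx
    simp only [Set.mem_union, Set.mem_diff] at hx
    rcases hx with ⟨hxD, _⟩ | hxZ'
    · exact hxZ (hCDZ x hxC hxD)
    · exact hxZ hxZ'
  have hd4 : Disjoint (D \ Z) Z := disjoint_sdiff_self_left
  have e0 : (Set.univ : Set R).ncard =
      (A \ Z).ncard + ((B \ Z).ncard + ((C \ Z).ncard + ((D \ Z).ncard + Z.ncard))) := by
    rw [hU, Set.ncard_union_eq hd1 (Set.toFinite _) (Set.toFinite _),
        Set.ncard_union_eq hd2 (Set.toFinite _) (Set.toFinite _),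
        Set.ncard_union_eq hd3 (Set.toFinite _) (Set.toFinite _),
        Set.ncard_union_eq hd4 (Set.toFinite _) (Set.toFinite _)]
  have eA : (A \ Z).ncard + Z.ncard = A.ncard :=
    Set.ncard_diff_add_ncard_of_subset hZA (Set.toFinite _)
  have eB : (B \ Z).ncard + Z.ncard = B.ncard :=
    Set.ncard_diff_add_ncard_of_subset hZB (Set.toFinite _)
  have eC : (C \ Z).ncard + Z.ncard = C.ncard :=
    Set.ncard_diff_add_ncard_of_subset hZC (Set.toFinite _)
  have eD : (D \ Z).ncard + Z.ncard = D.ncard :=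
    Set.ncard_diff_add_ncard_of_subset hZD (Set.toFinite _)
  have hcard : Nat.card R = (Set.univ : Set R).ncard := (Set.ncard_univ R).symm
  rw [hcard]
  push_cast
  omega
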